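/- arXiv:1006.1389 — 2 statements merged into one kernel-verified Lean document; each statement's English description precedes it below -/
import Mathlib

section
/- Let d ≥ 1, p ∈ [1, ∞), λ ∈ ℝ^d, h > 0 and m ≥ 1 an integer. Let φ : ℝ^d → ℝ be (m+1)-times continuously differentiable with D_λ^i φ ∈ L^p(ℝ^d) for all 1 ≤ i ≤ m+1. Then ‖δ_{h,λ}φ − Σ_{i=1}^{m} (h^{i−1}/i!) D_λ^i φ‖_{L^p(ℝ^d)} ≤ (h^m/(m+1)!) ‖D_λ^{m+1}φ‖_{L^p(ℝ^d)}. -/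
open MeasureTheory ENNReal Finset

/-- The directional derivative `D_λφ(x) = Dφ(x)(λ)`; its iterates give `D_λ^i`. -/
noncomputable def dirDeriv {d : ℕ} (lam : EuclideanSpace ℝ (Fin d))
    (φ : EuclideanSpace ℝ (Fin d) → ℝ) : EuclideanSpace ℝ (Fin d) → ℝ :=
  fun x => fderiv ℝ φ x lam

variable {d : ℕ}

lemma dirDeriv_contDiff (lam : EuclideanSpace ℝ (Fin d)) {n : ℕ}
    {φ : EuclideanSpace ℝ (Fin d) → ℝ} (hφ : ContDiff ℝ (n + 1 : ℕ) φ) :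
    ContDiff ℝ (n : ℕ) (dirDeriv lam φ) := by
  have h1 : ContDiff ℝ (n : ℕ) (fderiv ℝ φ) :=
    hφ.fderiv_right (by exact_mod_cast le_rfl)
  exact h1.clm_apply contDiff_const

lemma dirDeriv_iter_contDiff (lam : EuclideanSpace ℝ (Fin d)) :
    ∀ (i k : ℕ) (φ : EuclideanSpace ℝ (Fin d) → ℝ), ContDiff ℝ ((i + k : ℕ)) φ →
      ContDiff ℝ (k : ℕ) ((dirDeriv lam)^[i] φ)
  | 0, k, φ, h => by simpa using h
  | (i + 1), k, φ, h => by
    rw [Function.iterate_succ_apply]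
    exact dirDeriv_iter_contDiff lam i k (dirDeriv lam φ)
      (dirDeriv_contDiff lam (by convert h using 2; omega))

lemma iteratedDeriv_line (lam : EuclideanSpace ℝ (Fin d)) :
    ∀ (i : ℕ) (φ : EuclideanSpace ℝ (Fin d) → ℝ), ContDiff ℝ (i : ℕ) φ →
      ∀ (x : EuclideanSpace ℝ (Fin d)) (t : ℝ),
      iteratedDeriv i (fun s : ℝ => φ (x + s • lam)) t = (dirDeriv lam)^[i] φ (x + t • lam)
  | 0, φ, _, x, t => by simp
  | (i + 1), φ, hφ, x, t => by
    rw [iteratedDeriv_succ']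
    have hd : (deriv fun s : ℝ => φ (x + s • lam))
        = fun s : ℝ => dirDeriv lam φ (x + s • lam) := by
      funext s
      have h1 : HasDerivAt (fun s : ℝ => x + s • lam) lam s := by
        simpa using ((hasDerivAt_id s).smul_const lam).const_add x
      have h2 : HasFDerivAt φ (fderiv ℝ φ (x + s • lam)) (x + s • lam) :=
        (hφ.differentiable (by simp)
          (x + s • lam)).hasFDerivAt
      exact (h2.comp_hasDerivAt s h1).deriv
    rw [hd, Function.iterate_succ_apply]
    exact iteratedDeriv_line lam i (dirDeriv lam φ)
      (dirDeriv_contDiff lam hφ) x t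

lemma taylor_integral_remainder' {g : ℝ → ℝ} {n : ℕ} (hg : ContDiff ℝ (n + 1 : ℕ) g) (a b : ℝ) :
    g b - ∑ k ∈ Finset.range (n + 1),
        ((k.factorial : ℝ)⁻¹ * (b - a) ^ k) * iteratedDeriv k g a
      = ∫ t in a..b, ((n.factorial : ℝ)⁻¹ * (b - t) ^ n) * iteratedDeriv (n + 1) g t := by
  have hcont : Continuous (iteratedDeriv (n + 1) g) :=
    hg.continuous_iteratedDeriv (n + 1) (by exact_mod_cast le_rfl)
  have hint : IntervalIntegrable
      (fun t => ((n.factorial : ℝ)⁻¹ * (b - t) ^ n) * iteratedDeriv (n + 1) g t) volume a b :=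
    (((continuous_const.mul ((continuous_const.sub continuous_id).pow n))).mul
      hcont).intervalIntegrable a b
  have hderiv : ∀ t ∈ Set.uIcc a b, HasDerivAt (fun y => taylorWithinEval g n Set.univ y b)
      (((n.factorial : ℝ)⁻¹ * (b - t) ^ n) * iteratedDeriv (n + 1) g t) t := by
    intro t _
    have hdiff : DifferentiableWithinAt ℝ (iteratedDerivWithin n g Set.univ) Set.univ t := by
      rw [iteratedDerivWithin_univ]
      exact ((hg.differentiable_iteratedDeriv n
        (by exact_mod_cast Nat.lt_succ_self n)) t).differentiableWithinAt
    have h := hasDerivWithinAt_taylorWithinEval (f := g) (x := b) (y := t)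
      uniqueDiffOn_univ (by simp) (Set.mem_univ t) subset_rfl
      (hg.of_le (by exact_mod_cast Nat.le_succ n)).contDiffOn hdiff
    rw [iteratedDerivWithin_univ, hasDerivWithinAt_univ] at h
    simpa [smul_eq_mul] using h
  have := intervalIntegral.integral_eq_sub_of_hasDerivAt hderiv hint
  rw [this, taylorWithinEval_self, taylor_within_apply]
  simp [iteratedDerivWithin_univ, smul_eq_mul]

/-- `L^p` Taylor estimate of order `m` for the finite difference
`δ_{h,λ}φ = (φ(· + hλ) − φ)/h`. -/
theorem finite_difference_Lp_taylor
    (d : ℕ) (hd : 1 ≤ d) (p : ℝ≥0∞) (hp1 : 1 ≤ p) (hp2 : p ≠ ⊤)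
    (lam : EuclideanSpace ℝ (Fin d)) (h : ℝ) (hh : 0 < h)
    (m : ℕ) (hm : 1 ≤ m) (φ : EuclideanSpace ℝ (Fin d) → ℝ)
    (hφ : ContDiff ℝ (m + 1) φ)
    (hint : ∀ i, 1 ≤ i → i ≤ m + 1 →
      MemLp ((dirDeriv lam)^[i] φ) p (volume : Measure (EuclideanSpace ℝ (Fin d)))) :
    eLpNorm
        (fun x => (φ (x + h • lam) - φ x) / h
          - ∑ i ∈ Finset.Icc 1 m, (h ^ (i - 1) / (Nat.factorial i)) * (dirDeriv lam)^[i] φ x)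
        p (volume : Measure (EuclideanSpace ℝ (Fin d)))
      ≤ ENNReal.ofReal (h ^ m / (Nat.factorial (m + 1)))
          * eLpNorm ((dirDeriv lam)^[m + 1] φ) p (volume : Measure (EuclideanSpace ℝ (Fin d))) := by
  classical
  have hp0 : p ≠ 0 := (zero_lt_one.trans_le hp1).ne'
  set q : ℝ := p.toReal with hq_def
  have hq1 : 1 ≤ q := by
    rw [hq_def, ← ENNReal.toReal_one]
    exact ENNReal.toReal_mono hp2 hp1
  have hq_pos : 0 < q := lt_of_lt_of_le one_pos hq1
  have hφ' : ContDiff ℝ ((m + 1 : ℕ) : WithTop ℕ∞) φ := by exact_mod_cast hφ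
  set f := (dirDeriv lam)^[m + 1] φ with hf_def
  have hψc : ∀ i : ℕ, i ≤ m + 1 → Continuous ((dirDeriv lam)^[i] φ) := by
    intro i hi
    have := dirDeriv_iter_contDiff lam i 0 φ
      (hφ'.of_le (by exact_mod_cast (by omega : i + 0 ≤ m + 1)))
    exact this.continuous
  have hfc : Continuous f := hψc (m + 1) le_rfl
  set c : ℝ → ℝ := fun t => ((m.factorial : ℝ)⁻¹ * (h - t) ^ m) * h⁻¹ with hc_def
  have hc_cont : Continuous c := by
    apply Continuous.mul _ continuous_const
    exact continuous_const.mul ((continuous_const.sub continuous_id).pow m)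
  -- pointwise Taylor identity
  have key : ∀ x : EuclideanSpace ℝ (Fin d),
      (φ (x + h • lam) - φ x) / h
          - ∑ i ∈ Finset.Icc 1 m, (h ^ (i - 1) / (Nat.factorial i)) * (dirDeriv lam)^[i] φ x
        = ∫ t in (0:ℝ)..h, c t * f (x + t • lam) := by
    intro x
    have hgc : ContDiff ℝ ((m + 1 : ℕ)) (fun s : ℝ => φ (x + s • lam)) := by
      apply hφ'.comp
      exact contDiff_const.add (contDiff_id.smul contDiff_const)
    have T := taylor_integral_remainder' hgc 0 h
    have hline : ∀ k : ℕ, k ≤ m + 1 → ∀ t : ℝ,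
        iteratedDeriv k (fun s : ℝ => φ (x + s • lam)) t
          = (dirDeriv lam)^[k] φ (x + t • lam) := by
      intro k hk t
      exact iteratedDeriv_line lam k φ
        (hφ'.of_le (by exact_mod_cast hk)) x t
    have T' : φ (x + h • lam)
        - ∑ k ∈ Finset.range (m + 1),
            ((k.factorial : ℝ)⁻¹ * h ^ k) * (dirDeriv lam)^[k] φ x
        = ∫ t in (0:ℝ)..h, ((m.factorial : ℝ)⁻¹ * (h - t) ^ m) * f (x + t • lam) := by
      calc φ (x + h • lam)
          - ∑ k ∈ Finset.range (m + 1),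
              ((k.factorial : ℝ)⁻¹ * h ^ k) * (dirDeriv lam)^[k] φ x
          = (fun s : ℝ => φ (x + s • lam)) h - ∑ k ∈ Finset.range (m + 1),
              ((k.factorial : ℝ)⁻¹ * (h - 0) ^ k)
                * iteratedDeriv k (fun s : ℝ => φ (x + s • lam)) 0 := by
            congr 1
            apply Finset.sum_congr rfl
            intro k hk
            rw [hline k (by
              have := Finset.mem_range.mp hk; omega) 0]
            simp
        _ = ∫ t in (0:ℝ)..h,
              ((m.factorial : ℝ)⁻¹ * (h - t) ^ m)
                * iteratedDeriv (m + 1) (fun s : ℝ => φ (x + s • lam)) t := T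
        _ = ∫ t in (0:ℝ)..h, ((m.factorial : ℝ)⁻¹ * (h - t) ^ m) * f (x + t • lam) := by
            apply intervalIntegral.integral_congr
            intro t _
            dsimp only
            rw [hline (m + 1) le_rfl t]
    have hsplit : Finset.range (m + 1) = insert 0 (Finset.Icc 1 m) := by
      ext k
      simp only [Finset.mem_range, Finset.mem_insert, Finset.mem_Icc]
      omega
    have hsum : ∑ i ∈ Finset.Icc 1 m, (h ^ (i - 1) / (Nat.factorial i)) * (dirDeriv lam)^[i] φ x
        = ∑ i ∈ Finset.Icc 1 m,
            h⁻¹ * (((i.factorial : ℝ)⁻¹ * h ^ i) * (dirDeriv lam)^[i] φ x) := by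
      apply Finset.sum_congr rfl
      intro i hi
      have hi1 : 1 ≤ i := (Finset.mem_Icc.mp hi).1
      have hpow : h ^ i = h * h ^ (i - 1) := by
        conv_lhs => rw [show i = (i - 1) + 1 by omega]
        rw [pow_succ']
      rw [hpow]
      have hfac : (i.factorial : ℝ) ≠ 0 := Nat.cast_ne_zero.mpr i.factorial_ne_zero
      field_simp
    have e1 : (φ (x + h • lam) - φ x) / h
        - ∑ i ∈ Finset.Icc 1 m, (h ^ (i - 1) / (Nat.factorial i)) * (dirDeriv lam)^[i] φ x
        = h⁻¹ * (φ (x + h • lam) - ∑ k ∈ Finset.range (m + 1),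
            ((k.factorial : ℝ)⁻¹ * h ^ k) * (dirDeriv lam)^[k] φ x) := by
      rw [hsum, ← Finset.mul_sum, hsplit, Finset.sum_insert (by simp)]
      simp only [pow_zero, Nat.factorial_zero, Nat.cast_one, inv_one, one_mul,
        Function.iterate_zero_apply]
      ring
    rw [e1, T', ← intervalIntegral.integral_const_mul]
    apply intervalIntegral.integral_congr
    intro t _
    simp only [hc_def]
    ring
  -- notation
  set W : ℝ≥0∞ := ENNReal.ofReal (h ^ m / (Nat.factorial (m + 1))) with hW_def
  have hWconst_pos : (0:ℝ) < h ^ m / (Nat.factorial (m + 1)) := by positivity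
  have hW0 : W ≠ 0 := (ENNReal.ofReal_pos.mpr hWconst_pos).ne'
  have hWtop : W ≠ ⊤ := ENNReal.ofReal_ne_top
  set A : ℝ → ℝ≥0∞ := fun t => ENNReal.ofReal (c t) with hA_def
  have hc_nonneg : ∀ t ∈ Set.Ioc (0:ℝ) h, 0 ≤ c t := by
    intro t ht
    have h1 : (0:ℝ) ≤ h - t := sub_nonneg.mpr ht.2
    have h2 : (0:ℝ) ≤ h⁻¹ := by positivity
    simp only [hc_def]
    positivity
  have hAmeas : Measurable A := ENNReal.measurable_ofReal.comp hc_cont.measurable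
  -- value of the weight integral
  have hWeq : ∫⁻ t in Set.Ioc (0:ℝ) h, A t = W := by
    have hcint : IntegrableOn c (Set.Ioc (0:ℝ) h) := hc_cont.integrableOn_Ioc
    rw [hA_def]
    rw [← MeasureTheory.ofReal_integral_eq_lintegral_ofReal hcint
      ((ae_restrict_iff' measurableSet_Ioc).mpr (ae_of_all _ hc_nonneg))]
    rw [hW_def]
    congr 1
    rw [← intervalIntegral.integral_of_le hh.le]
    have e2 : ∫ t in (0:ℝ)..h, c t
        = ((m.factorial : ℝ)⁻¹ * h⁻¹) * ∫ t in (0:ℝ)..h, (h - t) ^ m := by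
      rw [← intervalIntegral.integral_const_mul]
      apply intervalIntegral.integral_congr
      intro t _
      simp only [hc_def]
      ring
    rw [e2, intervalIntegral.integral_comp_sub_left (fun u => u ^ m) h]
    simp only [sub_self, sub_zero]
    rw [integral_pow]
    have hfac : ((m + 1).factorial : ℝ) = (m + 1) * m.factorial := by
      rw [Nat.factorial_succ]; push_cast; ring
    rw [hfac]
    have h1 : (m.factorial : ℝ) ≠ 0 := Nat.cast_ne_zero.mpr m.factorial_ne_zero
    have h2 : ((m:ℝ) + 1) ≠ 0 := by positivity
    have h3 : h ^ (m + 1) = h * h ^ m := pow_succ' h m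
    rw [zero_pow (by omega), h3]
    field_simp
    ring
  -- base pointwise bound
  have hbase : ∀ x : EuclideanSpace ℝ (Fin d),
      ENNReal.ofReal |(φ (x + h • lam) - φ x) / h
          - ∑ i ∈ Finset.Icc 1 m, (h ^ (i - 1) / (Nat.factorial i)) * (dirDeriv lam)^[i] φ x|
        ≤ ∫⁻ t in Set.Ioc (0:ℝ) h, A t * ENNReal.ofReal |f (x + t • lam)| := by
    intro x
    have hcf_cont : Continuous (fun t : ℝ => |c t * f (x + t • lam)|) :=
      (hc_cont.mul (hfc.comp (continuous_const.add (continuous_id.smul continuous_const)))).abs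
    have habs : |(φ (x + h • lam) - φ x) / h
          - ∑ i ∈ Finset.Icc 1 m, (h ^ (i - 1) / (Nat.factorial i)) * (dirDeriv lam)^[i] φ x|
        ≤ ∫ t in (0:ℝ)..h, |c t * f (x + t • lam)| := by
      rw [key x]
      exact intervalIntegral.abs_integral_le_integral_abs hh.le
    calc ENNReal.ofReal |(φ (x + h • lam) - φ x) / h
          - ∑ i ∈ Finset.Icc 1 m, (h ^ (i - 1) / (Nat.factorial i)) * (dirDeriv lam)^[i] φ x|
        ≤ ENNReal.ofReal (∫ t in (0:ℝ)..h, |c t * f (x + t • lam)|) :=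
          ENNReal.ofReal_le_ofReal habs
      _ = ENNReal.ofReal (∫ t in Set.Ioc (0:ℝ) h, |c t * f (x + t • lam)|) := by
          rw [intervalIntegral.integral_of_le hh.le]
      _ = ∫⁻ t in Set.Ioc (0:ℝ) h, ENNReal.ofReal |c t * f (x + t • lam)| :=
          MeasureTheory.ofReal_integral_eq_lintegral_ofReal hcf_cont.integrableOn_Ioc
            (ae_of_all _ fun t => abs_nonneg _)
      _ = ∫⁻ t in Set.Ioc (0:ℝ) h, A t * ENNReal.ofReal |f (x + t • lam)| := by
          apply setLIntegral_congr_fun measurableSet_Ioc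
          intro t ht
          dsimp only
          rw [abs_mul, abs_of_nonneg (hc_nonneg t ht), ENNReal.ofReal_mul (hc_nonneg t ht)]
  -- pointwise Hölder bound
  have hpoint : ∀ x : EuclideanSpace ℝ (Fin d),
      (ENNReal.ofReal |(φ (x + h • lam) - φ x) / h
          - ∑ i ∈ Finset.Icc 1 m, (h ^ (i - 1) / (Nat.factorial i)) * (dirDeriv lam)^[i] φ x|) ^ q
        ≤ W ^ (q - 1) *
            ∫⁻ t in Set.Ioc (0:ℝ) h, A t * ENNReal.ofReal |f (x + t • lam)| ^ q := by
    intro x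
    rcases eq_or_lt_of_le hq1 with hq | hq
    · rw [← hq]
      simp only [ENNReal.rpow_one, sub_self, ENNReal.rpow_zero, one_mul]
      exact hbase x
    · have hcr : q.HolderConjugate (Real.conjExponent q) := Real.HolderConjugate.conjExponent hq
      set r : ℝ := Real.conjExponent q with hr_def
      have hc2 : r.HolderConjugate q := hcr.symm
      have hr_pos : 0 < r := hc2.pos
      have hBmeas : Measurable (fun t : ℝ => ENNReal.ofReal |f (x + t • lam)|) :=
        ENNReal.measurable_ofReal.comp
          ((hfc.comp (continuous_const.add (continuous_id.smul continuous_const))).abs.measurable)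
      have hsplitA : ∀ t : ℝ, A t = A t ^ (1/r) * A t ^ (1/q) := by
        intro t
        rw [← ENNReal.rpow_add_of_nonneg _ _ hc2.one_div_nonneg hcr.one_div_nonneg]
        rw [show (1/r + 1/q : ℝ) = 1 by
          rw [one_div, one_div]; exact hc2.inv_add_inv_eq_one]
        rw [ENNReal.rpow_one]
      have hH := ENNReal.lintegral_mul_le_Lp_mul_Lq
        ((volume : Measure ℝ).restrict (Set.Ioc 0 h)) hc2
        (f := fun t => A t ^ (1/r))
        (g := fun t => A t ^ (1/q) * ENNReal.ofReal |f (x + t • lam)|)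
        ((hAmeas.pow_const _).aemeasurable)
        (((hAmeas.pow_const _).mul hBmeas).aemeasurable)
      simp only [Pi.mul_apply] at hH
      have e3 : ∫⁻ t in Set.Ioc (0:ℝ) h,
          A t ^ (1/r) * (A t ^ (1/q) * ENNReal.ofReal |f (x + t • lam)|)
          = ∫⁻ t in Set.Ioc (0:ℝ) h, A t * ENNReal.ofReal |f (x + t • lam)| := by
        apply lintegral_congr
        intro t
        rw [← mul_assoc, ← hsplitA]
      have e4 : ∫⁻ t in Set.Ioc (0:ℝ) h, (A t ^ (1/r)) ^ r = W := by
        rw [← hWeq]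
        apply lintegral_congr
        intro t
        rw [← ENNReal.rpow_mul, one_div_mul_cancel hr_pos.ne', ENNReal.rpow_one]
      have e5 : ∫⁻ t in Set.Ioc (0:ℝ) h,
          (A t ^ (1/q) * ENNReal.ofReal |f (x + t • lam)|) ^ q
          = ∫⁻ t in Set.Ioc (0:ℝ) h, A t * ENNReal.ofReal |f (x + t • lam)| ^ q := by
        apply lintegral_congr
        intro t
        rw [ENNReal.mul_rpow_of_nonneg _ _ hq_pos.le, ← ENNReal.rpow_mul,
          one_div_mul_cancel hq_pos.ne', ENNReal.rpow_one]
      rw [e3, e4, e5] at hH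
      have hqr : (1/r) * q = q - 1 := by
        rw [one_div, ← hcr.one_sub_inv, sub_mul, one_mul, inv_mul_cancel₀ hq_pos.ne']
      calc (ENNReal.ofReal |(φ (x + h • lam) - φ x) / h
          - ∑ i ∈ Finset.Icc 1 m, (h ^ (i - 1) / (Nat.factorial i)) * (dirDeriv lam)^[i] φ x|) ^ q
          ≤ (∫⁻ t in Set.Ioc (0:ℝ) h, A t * ENNReal.ofReal |f (x + t • lam)|) ^ q :=
            ENNReal.rpow_le_rpow (hbase x) hq_pos.le
        _ ≤ (W ^ (1/r) *
              (∫⁻ t in Set.Ioc (0:ℝ) h, A t * ENNReal.ofReal |f (x + t • lam)| ^ q) ^ (1/q)) ^ q :=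
            ENNReal.rpow_le_rpow hH hq_pos.le
        _ = W ^ (q - 1) *
              ∫⁻ t in Set.Ioc (0:ℝ) h, A t * ENNReal.ofReal |f (x + t • lam)| ^ q := by
            rw [ENNReal.mul_rpow_of_nonneg _ _ hq_pos.le, ← ENNReal.rpow_mul,
              ← ENNReal.rpow_mul, hqr, one_div_mul_cancel hq_pos.ne', ENNReal.rpow_one]
  -- assemble
  rw [eLpNorm_eq_lintegral_rpow_enorm_toReal hp0 hp2, eLpNorm_eq_lintegral_rpow_enorm_toReal hp0 hp2]
  simp only [Real.enorm_eq_ofReal_abs, ← hq_def]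
  set I : ℝ≥0∞ := ∫⁻ x : EuclideanSpace ℝ (Fin d), ENNReal.ofReal |f x| ^ q with hI_def
  have hWq_top : W ^ (q - 1) ≠ ⊤ := ENNReal.rpow_ne_top_of_nonneg (sub_nonneg.mpr hq1) hWtop
  have hmeas_prod : AEMeasurable
      (Function.uncurry fun (x : EuclideanSpace ℝ (Fin d)) (t : ℝ) =>
        A t * ENNReal.ofReal |f (x + t • lam)| ^ q)
      ((volume : Measure (EuclideanSpace ℝ (Fin d))).prod
        ((volume : Measure ℝ).restrict (Set.Ioc 0 h))) := by
    apply Measurable.aemeasurable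
    apply Measurable.mul
    · exact hAmeas.comp measurable_snd
    · apply Measurable.pow_const
      apply ENNReal.measurable_ofReal.comp
      exact ((hfc.comp (continuous_fst.add (continuous_snd.smul continuous_const))).abs).measurable
  have hswap : ∫⁻ x : EuclideanSpace ℝ (Fin d),
        ∫⁻ t in Set.Ioc (0:ℝ) h, A t * ENNReal.ofReal |f (x + t • lam)| ^ q
      = ∫⁻ t in Set.Ioc (0:ℝ) h,
          ∫⁻ x : EuclideanSpace ℝ (Fin d), A t * ENNReal.ofReal |f (x + t • lam)| ^ q :=
    lintegral_lintegral_swap hmeas_prod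
  have hinner : ∀ t : ℝ, ∫⁻ x : EuclideanSpace ℝ (Fin d),
        A t * ENNReal.ofReal |f (x + t • lam)| ^ q = A t * I := by
    intro t
    rw [lintegral_const_mul' _ _ ENNReal.ofReal_ne_top]
    congr 1
    exact lintegral_add_right_eq_self (fun y => ENNReal.ofReal |f y| ^ q) (t • lam)
  calc (∫⁻ x : EuclideanSpace ℝ (Fin d), ENNReal.ofReal |(φ (x + h • lam) - φ x) / h
          - ∑ i ∈ Finset.Icc 1 m, (h ^ (i - 1) / (Nat.factorial i)) * (dirDeriv lam)^[i] φ x| ^ q)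
          ^ (1/q)
      ≤ (∫⁻ x : EuclideanSpace ℝ (Fin d), W ^ (q - 1) *
          ∫⁻ t in Set.Ioc (0:ℝ) h, A t * ENNReal.ofReal |f (x + t • lam)| ^ q) ^ (1/q) :=
        ENNReal.rpow_le_rpow (lintegral_mono hpoint) (by positivity)
    _ = (W ^ (q - 1) * ∫⁻ x : EuclideanSpace ℝ (Fin d),
          ∫⁻ t in Set.Ioc (0:ℝ) h, A t * ENNReal.ofReal |f (x + t • lam)| ^ q) ^ (1/q) := by
        rw [lintegral_const_mul' _ _ hWq_top]
    _ = (W ^ (q - 1) * (W * I)) ^ (1/q) := by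
        rw [hswap]
        congr 2
        calc ∫⁻ t in Set.Ioc (0:ℝ) h,
              ∫⁻ x : EuclideanSpace ℝ (Fin d), A t * ENNReal.ofReal |f (x + t • lam)| ^ q
            = ∫⁻ t in Set.Ioc (0:ℝ) h, A t * I := by
              apply lintegral_congr
              intro t
              exact hinner t
          _ = (∫⁻ t in Set.Ioc (0:ℝ) h, A t) * I := lintegral_mul_const _ hAmeas
          _ = W * I := by rw [hWeq]
    _ = (W ^ q * I) ^ (1/q) := by
        rw [← mul_assoc]
        congr 2
        have h6 := ENNReal.rpow_add (q - 1) 1 hW0 hWtop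
        rw [sub_add_cancel, ENNReal.rpow_one] at h6
        exact h6.symm
    _ = W * I ^ (1/q) := by
        rw [ENNReal.mul_rpow_of_nonneg _ _ (by positivity : (0:ℝ) ≤ 1/q),
          ← ENNReal.rpow_mul, mul_one_div_cancel hq_pos.ne', ENNReal.rpow_one]
    _ = W * (∫⁻ x : EuclideanSpace ℝ (Fin d), ENNReal.ofReal |f x| ^ q) ^ (1/q) := rfl
end

section
/- (Abstract Richardson acceleration.) Let (E, ‖·‖) be a real normed space, k ≥ 0 an integer, h₀ > 0, N ≥ 0, and let u, u_1, …, u_k ∈ E. Suppose (v_h)_{h ∈ (0, h₀]} is a family of elements of E such that ‖v_h − u − Σ_{j=1}^{k} h^j u_j‖ ≤ N h^{k+1} for all h ∈ (0, h₀]. Let b_0, …, b_k be the unique real numbers satisfying Σ_{j=0}^{k} b_j 2^{−ji} = δ_{i,0} for i = 0, …, k. Then for every h ∈ (0, h₀], ‖Σ_{j=0}^{k} b_j v_{2^{−j}h} − u‖ ≤ N h^{k+1} Σ_{j=0}^{k} |b_j| 2^{−j(k+1)}; in particular the extrapolated approximation Σ_{j=0}^{k} b_j v_{2^{−j}h} converges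 to u with rate h^{k+1}. -/
open Finset

/-- Abstract Richardson acceleration: if the approximations `v_h` admit a power
series expansion in `h` around the target `u` up to order `k` with remainder
`N h^{k+1}`, then the extrapolation `∑_j b_j v_{2^{−j} h}` with the Richardson
coefficients `b_j` approximates `u` with rate `h^{k+1}`. -/
theorem richardson_acceleration
    (E : Type*) [NormedAddCommGroup E] [NormedSpace ℝ E]
    (k : ℕ) (h₀ : ℝ) (hh₀ : 0 < h₀) (N : ℝ) (hN : 0 ≤ N)
    (u : E) (u' : ℕ → E) (v : ℝ → E)
    (hv : ∀ h ∈ Set.Ioc (0 : ℝ) h₀,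
      ‖v h - u - ∑ j ∈ Finset.Icc 1 k, h ^ j • u' j‖ ≤ N * h ^ (k + 1))
    (b : Fin (k + 1) → ℝ)
    (hb : ∀ i : Fin (k + 1),
      ∑ j : Fin (k + 1), b j * (2 : ℝ) ^ (-(j * i : ℤ)) = if i = 0 then 1 else 0) :
    ∀ h ∈ Set.Ioc (0 : ℝ) h₀,
      ‖(∑ j : Fin (k + 1), b j • v ((2 : ℝ) ^ (-(j : ℤ)) * h)) - u‖
        ≤ N * h ^ (k + 1) * ∑ j : Fin (k + 1), |b j| * (2 : ℝ) ^ (-(j * (k + 1) : ℤ)) := by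
  intro h hh
  obtain ⟨hpos, hle⟩ := hh
  have h2pos : ∀ j : Fin (k+1), (0:ℝ) < (2:ℝ) ^ (-(j:ℤ)) := fun j => zpow_pos (by norm_num) _
  have h2le : ∀ j : Fin (k+1), (2:ℝ) ^ (-(j:ℤ)) ≤ 1 := by
    intro j
    apply zpow_le_one_of_nonpos₀ (by norm_num)
    simp
  have hmem : ∀ j : Fin (k+1), (2:ℝ) ^ (-(j:ℤ)) * h ∈ Set.Ioc (0:ℝ) h₀ := by
    intro j
    constructor
    · exact mul_pos (h2pos j) hpos
    · calc (2:ℝ) ^ (-(j:ℤ)) * h ≤ 1 * h := by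
            exact mul_le_mul_of_nonneg_right (h2le j) hpos.le
        _ = h := one_mul h
        _ ≤ h₀ := hle
  have hb0 : ∑ j : Fin (k+1), b j = 1 := by
    have := hb 0
    simpa using this
  have hbi : ∀ i ∈ Finset.Icc 1 k,
      ∑ j : Fin (k+1), b j * (2:ℝ) ^ (-((j:ℤ) * (i:ℤ))) = 0 := by
    intro i hi
    obtain ⟨hi1, hik⟩ := Finset.mem_Icc.mp hi
    have hne : (⟨i, Nat.lt_succ_of_le hik⟩ : Fin (k+1)) ≠ 0 := by
      simp [Fin.ext_iff]; omega
    have := hb ⟨i, Nat.lt_succ_of_le hik⟩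
    rw [if_neg hne] at this
    convert this using 2
  set e : Fin (k+1) → E := fun j =>
    v ((2:ℝ)^(-(j:ℤ))*h) - u - ∑ i ∈ Finset.Icc 1 k, ((2:ℝ)^(-(j:ℤ))*h)^i • u' i with he
  have key : (∑ j : Fin (k+1), b j • v ((2:ℝ) ^ (-(j:ℤ)) * h)) - u
      = ∑ j : Fin (k+1), b j • e j := by
    have expand : ∑ j : Fin (k+1), b j • e j
        = (∑ j : Fin (k+1), b j • v ((2:ℝ)^(-(j:ℤ))*h))
          - (∑ j : Fin (k+1), b j) • u
          - ∑ j : Fin (k+1), b j • ∑ i ∈ Finset.Icc 1 k, ((2:ℝ)^(-(j:ℤ))*h)^i • u' i := by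
      simp [he, smul_sub, Finset.sum_sub_distrib, Finset.sum_smul]
    have hzero : ∑ j : Fin (k+1), b j • ∑ i ∈ Finset.Icc 1 k, ((2:ℝ)^(-(j:ℤ))*h)^i • u' i
        = 0 := by
      have : ∀ j : Fin (k+1), b j • ∑ i ∈ Finset.Icc 1 k, ((2:ℝ)^(-(j:ℤ))*h)^i • u' i
          = ∑ i ∈ Finset.Icc 1 k, (b j * (2:ℝ)^(-((j:ℤ)*(i:ℤ)))) • (h^i • u' i) := by
        intro j
        rw [Finset.smul_sum]
        refine Finset.sum_congr rfl fun i _ => ?_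
        rw [mul_pow, smul_smul, smul_smul]
        congr 1
        rw [← zpow_natCast ((2:ℝ)^(-(j:ℤ))) i, ← zpow_mul, neg_mul]
        ring
      rw [Finset.sum_congr rfl fun j _ => this j, Finset.sum_comm]
      refine Finset.sum_eq_zero fun i hi => ?_
      rw [← Finset.sum_smul, hbi i hi, zero_smul]
    rw [expand, hb0, one_smul, hzero, sub_zero]
  rw [key]
  calc ‖∑ j : Fin (k+1), b j • e j‖ ≤ ∑ j : Fin (k+1), ‖b j • e j‖ :=
        norm_sum_le _ _
    _ ≤ ∑ j : Fin (k+1), |b j| * (N * ((2:ℝ)^(-(j:ℤ))*h)^(k+1)) := by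
        refine Finset.sum_le_sum fun j _ => ?_
        rw [norm_smul, Real.norm_eq_abs]
        exact mul_le_mul_of_nonneg_left (hv _ (hmem j)) (abs_nonneg _)
    _ = N * h ^ (k+1) * ∑ j : Fin (k+1), |b j| * (2:ℝ) ^ (-((j:ℤ) * (k+1))) := by
        rw [Finset.mul_sum]
        refine Finset.sum_congr rfl fun j _ => ?_
        rw [mul_pow, ← zpow_natCast ((2:ℝ)^(-(j:ℤ))) (k+1), ← zpow_mul]
        push_cast
        ring
end
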